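/- Fix λ < 1 with λ ≠ 0 and q = 1 − λ. Consider a λ-exponential family whose natural parameter set Ω is nonempty, open and convex, and assume the divisive λ-potential φ_λ is differentiable on Ω with differentiation under the integral sign, i.e. e^{φ_λ(ϑ)}·∇φ_λ(ϑ) = ∫ [1 + λ ϑ·F(x)]₊^{1/λ − 1} F(x) dν(x) for all ϑ ∈ Ω. Then: (a) the function ϑ ↦ (1/λ)(e^{λ φ_λ(ϑ)} − 1) is convex on Ω; and (b) 1 − λ ∇φ_λ(ϑ)·ϑ > 0 for every ϑ ∈ Ω. -/

import Mathlib

open MeasureTheory Real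
open scoped RealInnerProductSpace ENNReal BigOperators

noncomputable section

/-- The `q`-deformed exponential `exp_q(t) = [1 + λ t]₊^{1/λ}` (with `q = 1 − λ`), valued in
`[0,∞]`, with the convention `0^{1/λ} = +∞` when `λ < 0`. -/
def qexp (lam t : ℝ) : ℝ≥0∞ :=
  if 0 < 1 + lam * t then ENNReal.ofReal ((1 + lam * t) ^ (1 / lam))
  else if 0 < lam then 0 else ⊤

lemma qexp_eq_rpow {lam : ℝ} (hlam : lam ≠ 0) (t : ℝ) :
    qexp lam t = (ENNReal.ofReal (1 + lam * t)) ^ (1 / lam) := by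
  unfold qexp
  by_cases h : 0 < 1 + lam * t
  · rw [if_pos h, ENNReal.ofReal_rpow_of_pos h]
  · rw [if_neg h]
    have h0 : ENNReal.ofReal (1 + lam * t) = 0 := ENNReal.ofReal_eq_zero.mpr (not_lt.mp h)
    rw [h0]
    rcases lt_or_gt_of_ne hlam with hneg | hpos
    · rw [if_neg (not_lt.mpr hneg.le), ENNReal.zero_rpow_of_neg (one_div_neg.mpr hneg)]
    · rw [if_pos hpos, ENNReal.zero_rpow_of_pos (one_div_pos.mpr hpos)]

lemma pos_ae_of_lintegral_rpow_ne_top {X : Type*} [MeasurableSpace X] {ν : Measure X}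
    {w : X → ℝ} (hw : Measurable w) {p : ℝ} (hp : p < 0)
    (hfin : ∫⁻ x, ENNReal.ofReal (w x) ^ p ∂ν ≠ ⊤) : ∀ᵐ x ∂ν, 0 < w x := by
  have h := ae_lt_top (hw.ennreal_ofReal.pow_const p) hfin
  filter_upwards [h] with x hx
  by_contra hc
  rw [not_lt] at hc
  rw [ENNReal.ofReal_eq_zero.mpr hc, ENNReal.zero_rpow_of_neg hp] at hx
  exact absurd hx (lt_irrefl _)

lemma rev_holder {X : Type*} [MeasurableSpace X] {ν : Measure X}
    {w v : X → ℝ} (hw : Measurable w) (hv : Measurable v)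
    (hwpos : ∀ᵐ x ∂ν, 0 < w x) (hvpos : ∀ᵐ x ∂ν, 0 < v x)
    {p : ℝ} (hp : p < 0)
    {S V : ℝ} (hSpos : 0 < S) (hVpos : 0 < V)
    (hS : ∫⁻ x, ENNReal.ofReal (w x) ^ p ∂ν = ENNReal.ofReal S)
    (hV : ∫⁻ x, ENNReal.ofReal (v x) ^ p ∂ν = ENNReal.ofReal V) :
    ENNReal.ofReal (S ^ ((p - 1) / p) * V ^ (1 / p)) ≤
      ∫⁻ x, ENNReal.ofReal (w x) ^ (p - 1) * ENNReal.ofReal (v x) ∂ν := by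
  set α : ℝ := p / (p - 1) with hα_def
  set β : ℝ := 1 / (1 - p) with hβ_def
  have hp1 : p - 1 < 0 := by linarith
  have hp0 : p ≠ 0 := hp.ne
  have hpm1 : p - 1 ≠ 0 := hp1.ne
  have h1p : (1 : ℝ) - p ≠ 0 := by linarith
  have hα : 0 < α := div_pos_iff.mpr (Or.inr ⟨hp, hp1⟩)
  have hβ : 0 < β := by
    apply one_div_pos.mpr; linarith
  have hαβ : α + β = 1 := by
    rw [hα_def, hβ_def, div_add_div _ _ hpm1 h1p, div_eq_one_iff_eq (mul_ne_zero hpm1 h1p)]; ring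
  have he1 : (p - 1) * α = p := by rw [hα_def, mul_div_assoc']; exact mul_div_cancel_left₀ p hpm1
  have he2 : α + p * β = 0 := by
    rw [hα_def, hβ_def, mul_one_div, div_add_div _ _ hpm1 h1p, div_eq_zero_iff]; left; ring
  set A := ∫⁻ x, ENNReal.ofReal (w x) ^ (p - 1) * ENNReal.ofReal (v x) ∂ν with hA_def
  have hmeas_f : Measurable fun x => ENNReal.ofReal (w x) ^ (p - 1) * ENNReal.ofReal (v x) :=
    (hw.ennreal_ofReal.pow_const _).mul hv.ennreal_ofReal
  have hmeas_g : Measurable fun x => ENNReal.ofReal (v x) ^ p :=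
    hv.ennreal_ofReal.pow_const _
  have h2 : ENNReal.ofReal S ≤ A ^ α * ENNReal.ofReal V ^ β := by
    rw [← hS, ← hV]
    calc ∫⁻ x, ENNReal.ofReal (w x) ^ p ∂ν
        = ∫⁻ x, (ENNReal.ofReal (w x) ^ (p - 1) * ENNReal.ofReal (v x)) ^ α *
            (ENNReal.ofReal (v x) ^ p) ^ β ∂ν := by
          apply lintegral_congr_ae
          filter_upwards [hwpos, hvpos] with x hwx hvx
          have hw1 : ENNReal.ofReal (w x) ^ (p - 1) = ENNReal.ofReal (w x ^ (p - 1)) :=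
            ENNReal.ofReal_rpow_of_pos hwx
          rw [hw1, ← ENNReal.ofReal_mul (Real.rpow_nonneg hwx.le _),
            ENNReal.ofReal_rpow_of_pos (mul_pos (Real.rpow_pos_of_pos hwx _) hvx),
            ENNReal.ofReal_rpow_of_pos hvx,
            ENNReal.ofReal_rpow_of_pos (Real.rpow_pos_of_pos hvx _),
            ← ENNReal.ofReal_mul (Real.rpow_nonneg (by positivity) _),
            ENNReal.ofReal_rpow_of_pos hwx]
          congr 1
          rw [Real.mul_rpow (Real.rpow_nonneg hwx.le _) hvx.le,
            ← Real.rpow_mul hwx.le, ← Real.rpow_mul hvx.le, he1,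
            mul_assoc, ← Real.rpow_add hvx, he2, Real.rpow_zero, mul_one]
      _ ≤ (∫⁻ x, ENNReal.ofReal (w x) ^ (p - 1) * ENNReal.ofReal (v x) ∂ν) ^ α *
            (∫⁻ x, ENNReal.ofReal (v x) ^ p ∂ν) ^ β :=
          ENNReal.lintegral_mul_norm_pow_le hmeas_f.aemeasurable hmeas_g.aemeasurable
            hα.le hβ.le hαβ
  by_cases hAtop : A = ⊤
  · rw [hAtop]; exact le_top
  have hA0 : A ≠ 0 := by
    intro h0
    rw [h0, ENNReal.zero_rpow_of_pos hα, zero_mul] at h2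
    exact absurd (le_antisymm h2 zero_le) (by simp [ENNReal.ofReal_eq_zero, not_le, hSpos])
  set T : ℝ := A.toReal with hT_def
  have hTpos : 0 < T := ENNReal.toReal_pos hA0 hAtop
  have hAT : A = ENNReal.ofReal T := (ENNReal.ofReal_toReal hAtop).symm
  rw [hAT]
  apply ENNReal.ofReal_le_ofReal
  have h3 : S ≤ T ^ α * V ^ β := by
    have h2' := h2
    rw [hAT, ENNReal.ofReal_rpow_of_pos hTpos, ENNReal.ofReal_rpow_of_pos hVpos,
      ← ENNReal.ofReal_mul (Real.rpow_nonneg hTpos.le _)] at h2'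
    exact (ENNReal.ofReal_le_ofReal_iff (by positivity)).mp h2'
  have h4 : S ^ (1 / α) ≤ T * V ^ (β * (1 / α)) := by
    have h5 : S ^ (1 / α) ≤ (T ^ α * V ^ β) ^ (1 / α) :=
      Real.rpow_le_rpow hSpos.le h3 (by positivity)
    rwa [Real.mul_rpow (by positivity) (by positivity), ← Real.rpow_mul hTpos.le,
      mul_one_div_cancel hα.ne', Real.rpow_one, ← Real.rpow_mul hVpos.le] at h5
  have hia : 1 / α = (p - 1) / p := by rw [hα_def, one_div_div]
  have hexp : β * (1 / α) + 1 / p = 0 := by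
    rw [hia, hβ_def, div_mul_div_comm, one_mul, div_add_div _ _ (mul_ne_zero h1p hp0) hp0,
      div_eq_zero_iff]; left; ring
  calc S ^ ((p - 1) / p) * V ^ (1 / p) = S ^ (1 / α) * V ^ (1 / p) := by rw [hia]
    _ ≤ T * V ^ (β * (1 / α)) * V ^ (1 / p) :=
        mul_le_mul_of_nonneg_right h4 (Real.rpow_nonneg hVpos.le _)
    _ = T * V ^ (β * (1 / α) + 1 / p) := by rw [mul_assoc, ← Real.rpow_add hVpos]
    _ = T := by rw [hexp, Real.rpow_zero, mul_one]

/-- For a λ-exponential family (`λ < 1`, `λ ≠ 0`) with nonempty open convex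
natural parameter set `Ω`, divisive potential `φ_λ` (so `e^{φ_λ(ϑ)} = ∫ exp_q(ϑ·F) dν`),
differentiable on `Ω` with differentiation under the integral sign
`e^{φ_λ(ϑ)}·∇φ_λ(ϑ) = ∫ [1 + λϑ·F]₊^{1/λ−1} F dν`: (a) `ϑ ↦ (1/λ)(e^{λφ_λ(ϑ)} − 1)` is convex
on `Ω`, and (b) `1 − λ∇φ_λ(ϑ)·ϑ > 0` on `Ω`. -/
theorem divisivePotential_cConvex {d : ℕ} {X : Type*} [MeasurableSpace X] (ν : Measure X)
    (lam : ℝ) (hlam0 : lam ≠ 0) (hlam1 : lam < 1)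
    (F : X → EuclideanSpace ℝ (Fin d)) (hF : Measurable F)
    (Ω : Set (EuclideanSpace ℝ (Fin d)))
    (hne : Ω.Nonempty) (hop : IsOpen Ω) (hconv : Convex ℝ Ω)
    (φ : EuclideanSpace ℝ (Fin d) → ℝ)
    (hφ : ∀ ϑ ∈ Ω, ∫⁻ x, qexp lam ⟪ϑ, F x⟫ ∂ν = ENNReal.ofReal (Real.exp (φ ϑ)))
    (hdiff : ∀ ϑ ∈ Ω, DifferentiableAt ℝ φ ϑ)
    (hInt : ∀ ϑ ∈ Ω,
      Integrable (fun x => ((max (1 + lam * ⟪ϑ, F x⟫) 0) ^ (1 / lam - 1)) • F x) ν)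
    (hDUI : ∀ ϑ ∈ Ω, Real.exp (φ ϑ) • gradient φ ϑ
      = ∫ x, ((max (1 + lam * ⟪ϑ, F x⟫) 0) ^ (1 / lam - 1)) • F x ∂ν) :
    ConvexOn ℝ Ω (fun ϑ => (1 / lam) * (Real.exp (lam * φ ϑ) - 1)) ∧
    ∀ ϑ ∈ Ω, 0 < 1 - lam * ⟪gradient φ ϑ, ϑ⟫ := by
  have hu_meas : ∀ ϑ : EuclideanSpace ℝ (Fin d),
      Measurable fun x => 1 + lam * ⟪ϑ, F x⟫ :=
    fun ϑ => ((measurable_const.inner hF).const_mul lam).const_add 1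
  have hW : ∀ ϑ ∈ Ω, ∫⁻ x, (ENNReal.ofReal (1 + lam * ⟪ϑ, F x⟫)) ^ (1 / lam) ∂ν
      = ENNReal.ofReal (Real.exp (φ ϑ)) := by
    intro ϑ hϑ
    rw [← hφ ϑ hϑ]
    exact lintegral_congr fun x => (qexp_eq_rpow hlam0 _).symm
  have hae : ∀ ϑ ∈ Ω, ∀ᵐ x ∂ν, 0 < 1 + lam * ⟪ϑ, F x⟫ ∨ 0 < lam := by
    intro ϑ hϑ
    rcases lt_or_gt_of_ne hlam0 with hneg | hpos
    · have hfin : ∫⁻ x, (ENNReal.ofReal (1 + lam * ⟪ϑ, F x⟫)) ^ (1 / lam) ∂ν ≠ ⊤ := by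
        rw [hW ϑ hϑ]; exact ENNReal.ofReal_ne_top
      filter_upwards [pos_ae_of_lintegral_rpow_ne_top (hu_meas ϑ) (one_div_neg.mpr hneg) hfin]
        with x hx
      exact Or.inl hx
    · exact Filter.Eventually.of_forall fun x => Or.inr hpos
  -- Part (b)
  have hpartb : ∀ ϑ ∈ Ω, 0 < 1 - lam * ⟪gradient φ ϑ, ϑ⟫ := by
    intro ϑ hϑ
    set g : X → ℝ := fun x => (max (1 + lam * ⟪ϑ, F x⟫) 0) ^ (1 / lam - 1) with hg_def
    set K : X → ℝ := fun x => (max (1 + lam * ⟪ϑ, F x⟫) 0) ^ (1 / lam) with hK_def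
    have hg_nonneg : ∀ x, 0 ≤ g x := fun x => Real.rpow_nonneg (le_max_right _ _) _
    have hK_nonneg : ∀ x, 0 ≤ K x := fun x => Real.rpow_nonneg (le_max_right _ _) _
    have hK_meas : Measurable K := ((hu_meas ϑ).max measurable_const).pow_const _
    have hg_meas : Measurable g := ((hu_meas ϑ).max measurable_const).pow_const _
    have hKW : ∀ᵐ x ∂ν,
        (ENNReal.ofReal (1 + lam * ⟪ϑ, F x⟫)) ^ (1 / lam) = ENNReal.ofReal (K x) := by
      filter_upwards [hae ϑ hϑ] with x hx
      by_cases hu : 0 < 1 + lam * ⟪ϑ, F x⟫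
      · rw [ENNReal.ofReal_rpow_of_pos hu, hK_def]
        simp only
        rw [max_eq_left hu.le]
      · have hl : 0 < lam := hx.resolve_left hu
        rw [ENNReal.ofReal_eq_zero.mpr (not_lt.mp hu),
          ENNReal.zero_rpow_of_pos (one_div_pos.mpr hl), hK_def]
        simp only
        rw [max_eq_right (not_lt.mp hu), Real.zero_rpow (one_div_ne_zero hlam0),
          ENNReal.ofReal_zero]
    have hKlint : ∫⁻ x, ENNReal.ofReal (K x) ∂ν = ENNReal.ofReal (Real.exp (φ ϑ)) := by
      rw [← lintegral_congr_ae hKW]; exact hW ϑ hϑ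
    have hKint : Integrable K ν := by
      refine ⟨hK_meas.aestronglyMeasurable, ?_⟩
      rw [hasFiniteIntegral_iff_ofReal (Filter.Eventually.of_forall hK_nonneg), hKlint]
      exact ENNReal.ofReal_lt_top
    have hKval : ∫ x, K x ∂ν = Real.exp (φ ϑ) := by
      rw [integral_eq_lintegral_of_nonneg_ae (Filter.Eventually.of_forall hK_nonneg)
        hK_meas.aestronglyMeasurable, hKlint, ENNReal.toReal_ofReal (Real.exp_nonneg _)]
    have hgu : ∀ᵐ x ∂ν, g x * (1 + lam * ⟪ϑ, F x⟫) = K x := by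
      filter_upwards [hae ϑ hϑ] with x hx
      by_cases hu : 0 < 1 + lam * ⟪ϑ, F x⟫
      · rw [hg_def, hK_def]
        simp only
        rw [max_eq_left hu.le]
        have h1 : (1 / lam - 1) + 1 = 1 / lam := by ring
        have h2 := Real.rpow_add_one hu.ne' (1 / lam - 1)
        rw [h1] at h2
        exact h2.symm
      · have hl : 0 < lam := hx.resolve_left hu
        rw [hg_def, hK_def]
        simp only
        rw [max_eq_right (not_lt.mp hu), Real.zero_rpow (one_div_ne_zero hlam0),
          Real.zero_rpow ?hne, zero_mul]
        case hne =>
          have : 1 < 1 / lam := by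
            rw [lt_div_iff₀ hl, one_mul]; exact hlam1
          exact sub_ne_zero_of_ne (ne_of_gt this)
    have hgu_int : Integrable (fun x => g x * (1 + lam * ⟪ϑ, F x⟫)) ν :=
      hKint.congr (hgu.mono fun x hx => hx.symm)
    have hinner_int : Integrable (fun x => ⟪ϑ, g x • F x⟫) ν := by
      have h := ContinuousLinearMap.integrable_comp (innerSL ℝ ϑ) (hInt ϑ hϑ)
      exact h.congr (Filter.Eventually.of_forall fun x => rfl)
    have hinteg_inner : ∫ x, ⟪ϑ, g x • F x⟫ ∂ν = Real.exp (φ ϑ) * ⟪ϑ, gradient φ ϑ⟫ := by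
      rw [integral_inner (hInt ϑ hϑ) ϑ, ← hDUI ϑ hϑ, real_inner_smul_right]
    have hmul_eq : (fun x => g x * (lam * ⟪ϑ, F x⟫)) = fun x => lam * ⟪ϑ, g x • F x⟫ := by
      funext x; rw [real_inner_smul_right]; ring
    have hgu1_int : Integrable (fun x => g x * (lam * ⟪ϑ, F x⟫)) ν := by
      rw [hmul_eq]; exact hinner_int.const_mul lam
    have hg_int : Integrable g ν := by
      have hgr : g = fun x => g x * (1 + lam * ⟪ϑ, F x⟫) - g x * (lam * ⟪ϑ, F x⟫) := by
        funext x; ring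
      rw [hgr]; exact hgu_int.sub hgu1_int
    have hgval : ∫ x, g x ∂ν = Real.exp (φ ϑ) * (1 - lam * ⟪ϑ, gradient φ ϑ⟫) := by
      have hsplit : ∫ x, g x ∂ν
          = ∫ x, g x * (1 + lam * ⟪ϑ, F x⟫) ∂ν - ∫ x, g x * (lam * ⟪ϑ, F x⟫) ∂ν := by
        rw [← integral_sub hgu_int hgu1_int]
        congr 1; funext x; ring
      rw [hsplit, integral_congr_ae hgu, hKval, hmul_eq, integral_const_mul, hinteg_inner]
      ring
    have hgpos : 0 < ∫ x, g x ∂ν := by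
      rcases (integral_nonneg (f := g) hg_nonneg).lt_or_eq with h | h
      · exact h
      · exfalso
        have hg0 : g =ᵐ[ν] 0 :=
          (integral_eq_zero_iff_of_nonneg hg_nonneg hg_int).mp h.symm
        have hK0 : K =ᵐ[ν] 0 := by
          filter_upwards [hg0, hgu] with x h0 h1
          rw [← h1]
          simp [Pi.zero_apply] at h0 ⊢
          left; exact h0
        have hKzero : ∫ x, K x ∂ν = 0 := by
          rw [integral_congr_ae hK0]; simp
        rw [hKval] at hKzero
        exact (Real.exp_pos _).ne' hKzero
    rw [hgval] at hgpos
    rw [real_inner_comm]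
    rcases mul_pos_iff.mp hgpos with ⟨_, h⟩ | ⟨h, _⟩
    · exact h
    · linarith [Real.exp_pos (φ ϑ)]
  refine ⟨⟨hconv, ?_⟩, hpartb⟩
  intro x hx y hy a b ha hb hab
  have hθ : a • x + b • y ∈ Ω := hconv hx hy ha hb hab
  have hukey : ∀ z, 1 + lam * ⟪a • x + b • y, F z⟫
      = a * (1 + lam * ⟪x, F z⟫) + b * (1 + lam * ⟪y, F z⟫) := by
    intro z
    rw [inner_add_left, real_inner_smul_left, real_inner_smul_left]
    linear_combination (-1 : ℝ) * hab
  simp only [smul_eq_mul]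
  rcases lt_or_gt_of_ne hlam0 with hneg | hpos
  · -- λ < 0 : reverse Minkowski
    have hp : 1 / lam < 0 := one_div_neg.mpr hneg
    have hpos' : ∀ w ∈ Ω, ∀ᵐ z ∂ν, 0 < 1 + lam * ⟪w, F z⟫ := fun w hw =>
      pos_ae_of_lintegral_rpow_ne_top (hu_meas w) hp
        (by rw [hW w hw]; exact ENNReal.ofReal_ne_top)
    have h0 := rev_holder (hu_meas (a • x + b • y)) (hu_meas x) (hpos' _ hθ) (hpos' x hx)
      hp (Real.exp_pos _) (Real.exp_pos _) (hW _ hθ) (hW x hx)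
    have h1 := rev_holder (hu_meas (a • x + b • y)) (hu_meas y) (hpos' _ hθ) (hpos' y hy)
      hp (Real.exp_pos _) (Real.exp_pos _) (hW _ hθ) (hW y hy)
    have hmeasθp : Measurable fun z =>
        ENNReal.ofReal (1 + lam * ⟪a • x + b • y, F z⟫) ^ (1 / lam - 1) :=
      (hu_meas _).ennreal_ofReal.pow_const _
    have step1 : ENNReal.ofReal (Real.exp (φ (a • x + b • y)))
        = ENNReal.ofReal a * (∫⁻ z, ENNReal.ofReal (1 + lam * ⟪a • x + b • y, F z⟫) ^ (1 / lam - 1)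
            * ENNReal.ofReal (1 + lam * ⟪x, F z⟫) ∂ν)
          + ENNReal.ofReal b * (∫⁻ z, ENNReal.ofReal (1 + lam * ⟪a • x + b • y, F z⟫) ^ (1 / lam - 1)
            * ENNReal.ofReal (1 + lam * ⟪y, F z⟫) ∂ν) := by
      rw [← hW _ hθ]
      have e1 : ∫⁻ z, ENNReal.ofReal (1 + lam * ⟪a • x + b • y, F z⟫) ^ (1 / lam) ∂ν
          = ∫⁻ z, (ENNReal.ofReal a * (ENNReal.ofReal (1 + lam * ⟪a • x + b • y, F z⟫) ^ (1 / lam - 1)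
              * ENNReal.ofReal (1 + lam * ⟪x, F z⟫))
            + ENNReal.ofReal b * (ENNReal.ofReal (1 + lam * ⟪a • x + b • y, F z⟫) ^ (1 / lam - 1)
              * ENNReal.ofReal (1 + lam * ⟪y, F z⟫))) ∂ν := by
        apply lintegral_congr_ae
        filter_upwards [hpos' _ hθ, hpos' x hx, hpos' y hy] with z h0' h1' h2'
        have hsplit : (1 + lam * ⟪a • x + b • y, F z⟫) ^ (1 / lam)
            = (1 + lam * ⟪a • x + b • y, F z⟫) ^ (1 / lam - 1)
              * (1 + lam * ⟪a • x + b • y, F z⟫) := by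
          have hadd : (1 / lam - 1) + 1 = 1 / lam := by ring
          have h2 := Real.rpow_add_one h0'.ne' (1 / lam - 1)
          rw [hadd] at h2
          exact h2
        have hkey : (1 + lam * ⟪a • x + b • y, F z⟫) ^ (1 / lam)
            = a * ((1 + lam * ⟪a • x + b • y, F z⟫) ^ (1 / lam - 1) * (1 + lam * ⟪x, F z⟫))
              + b * ((1 + lam * ⟪a • x + b • y, F z⟫) ^ (1 / lam - 1) * (1 + lam * ⟪y, F z⟫)) := by
          rw [hsplit]
          set C := (1 + lam * ⟪a • x + b • y, F z⟫) ^ (1 / lam - 1) with hC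
          rw [hukey z]
          ring
        rw [ENNReal.ofReal_rpow_of_pos h0', hkey,
          ENNReal.ofReal_add (mul_nonneg ha (by positivity)) (mul_nonneg hb (by positivity)),
          ENNReal.ofReal_mul ha, ENNReal.ofReal_mul hb,
          ENNReal.ofReal_mul (by positivity), ENNReal.ofReal_mul (by positivity),
          ← ENNReal.ofReal_rpow_of_pos h0']
      rw [e1, lintegral_add_left'
          (f := fun z => ENNReal.ofReal a * (ENNReal.ofReal (1 + lam * ⟪a • x + b • y, F z⟫) ^ (1 / lam - 1) * ENNReal.ofReal (1 + lam * ⟪x, F z⟫)))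
          (((hmeasθp.mul (hu_meas x).ennreal_ofReal).const_mul _).aemeasurable) _,
        lintegral_const_mul'' _ (f := fun z => (ENNReal.ofReal (1 + lam * ⟪a • x + b • y, F z⟫) ^ (1 / lam - 1) * ENNReal.ofReal (1 + lam * ⟪x, F z⟫)))
          ((hmeasθp.mul (hu_meas x).ennreal_ofReal)).aemeasurable,
        lintegral_const_mul'' _ (f := fun z => (ENNReal.ofReal (1 + lam * ⟪a • x + b • y, F z⟫) ^ (1 / lam - 1) * ENNReal.ofReal (1 + lam * ⟪y, F z⟫)))
          ((hmeasθp.mul (hu_meas y).ennreal_ofReal)).aemeasurable]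
    have hcomb : ENNReal.ofReal (a * (Real.exp (φ (a • x + b • y)) ^ ((1 / lam - 1) / (1 / lam))
            * Real.exp (φ x) ^ (1 / (1 / lam)))
          + b * (Real.exp (φ (a • x + b • y)) ^ ((1 / lam - 1) / (1 / lam))
            * Real.exp (φ y) ^ (1 / (1 / lam))))
        ≤ ENNReal.ofReal (Real.exp (φ (a • x + b • y))) := by
      rw [step1, ENNReal.ofReal_add (mul_nonneg ha (by positivity)) (mul_nonneg hb (by positivity)),
        ENNReal.ofReal_mul ha, ENNReal.ofReal_mul hb]
      exact add_le_add (mul_le_mul_right h0 _) (mul_le_mul_right h1 _)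
    have hreal : a * (Real.exp (φ (a • x + b • y)) ^ ((1 / lam - 1) / (1 / lam))
            * Real.exp (φ x) ^ (1 / (1 / lam)))
          + b * (Real.exp (φ (a • x + b • y)) ^ ((1 / lam - 1) / (1 / lam))
            * Real.exp (φ y) ^ (1 / (1 / lam)))
        ≤ Real.exp (φ (a • x + b • y)) :=
      (ENNReal.ofReal_le_ofReal_iff (Real.exp_nonneg _)).mp hcomb
    have hc : (1 / lam - 1) / (1 / lam) = 1 - lam := by
      field_simp
    have hinv : 1 / (1 / lam) = lam := one_div_one_div lam
    rw [hc, hinv] at hreal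
    have hfin2 : a * Real.exp (φ x) ^ lam + b * Real.exp (φ y) ^ lam
        ≤ Real.exp (φ (a • x + b • y)) ^ lam := by
      have hD : 0 < Real.exp (φ (a • x + b • y)) ^ (1 - lam) :=
        Real.rpow_pos_of_pos (Real.exp_pos _) _
      apply le_of_mul_le_mul_right _ hD
      calc (a * Real.exp (φ x) ^ lam + b * Real.exp (φ y) ^ lam)
            * Real.exp (φ (a • x + b • y)) ^ (1 - lam)
          = a * (Real.exp (φ (a • x + b • y)) ^ (1 - lam) * Real.exp (φ x) ^ lam)
            + b * (Real.exp (φ (a • x + b • y)) ^ (1 - lam) * Real.exp (φ y) ^ lam) := by ring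
        _ ≤ Real.exp (φ (a • x + b • y)) := hreal
        _ = Real.exp (φ (a • x + b • y)) ^ lam * Real.exp (φ (a • x + b • y)) ^ (1 - lam) := by
            rw [← Real.rpow_add (Real.exp_pos _)]
            norm_num
    have hexp_eq : ∀ w : EuclideanSpace ℝ (Fin d),
        Real.exp (φ w) ^ lam = Real.exp (lam * φ w) := by
      intro w
      rw [← Real.exp_mul, mul_comm]
    rw [hexp_eq, hexp_eq, hexp_eq] at hfin2
    calc 1 / lam * (Real.exp (lam * φ (a • x + b • y)) - 1)
        ≤ 1 / lam * ((a * Real.exp (lam * φ x) + b * Real.exp (lam * φ y)) - 1) := by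
          apply mul_le_mul_of_nonpos_left (by linarith) (by
            apply le_of_lt; exact one_div_neg.mpr hneg)
      _ = a * (1 / lam * (Real.exp (lam * φ x) - 1)) + b * (1 / lam * (Real.exp (lam * φ y) - 1)) := by
          linear_combination (1 / lam) * hab
  · -- 0 < λ < 1 : Minkowski
    have hp1 : (1 : ℝ) ≤ 1 / lam := by
      rw [le_div_iff₀ hpos, one_mul]; exact hlam1.le
    have hppos : (0 : ℝ) < 1 / lam := one_div_pos.mpr hpos
    have hfm : Measurable fun z => ENNReal.ofReal (a * (1 + lam * ⟪x, F z⟫)) :=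
      ((hu_meas x).const_mul a).ennreal_ofReal
    have hgm : Measurable fun z => ENNReal.ofReal (b * (1 + lam * ⟪y, F z⟫)) :=
      ((hu_meas y).const_mul b).ennreal_ofReal
    have hmono : ∫⁻ z, ENNReal.ofReal (1 + lam * ⟪a • x + b • y, F z⟫) ^ (1 / lam) ∂ν
        ≤ ∫⁻ z, ((fun z => ENNReal.ofReal (a * (1 + lam * ⟪x, F z⟫)))
            + fun z => ENNReal.ofReal (b * (1 + lam * ⟪y, F z⟫))) z ^ (1 / lam) ∂ν := by
      apply lintegral_mono; intro z
      apply ENNReal.rpow_le_rpow _ hppos.le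
      rw [hukey z]
      exact ENNReal.ofReal_add_le
    have hmink := ENNReal.lintegral_Lp_add_le (μ := ν) hfm.aemeasurable hgm.aemeasurable hp1
    have hcalc : ∀ (c : ℝ) (w : EuclideanSpace ℝ (Fin d)), 0 ≤ c → w ∈ Ω →
        (∫⁻ z, ENNReal.ofReal (c * (1 + lam * ⟪w, F z⟫)) ^ (1 / lam) ∂ν) ^ (1 / (1 / lam))
          = ENNReal.ofReal c * ENNReal.ofReal (Real.exp (φ w)) ^ (1 / (1 / lam)) := by
      intro c w hc hw
      have hpt : ∀ z, ENNReal.ofReal (c * (1 + lam * ⟪w, F z⟫)) ^ (1 / lam)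
          = ENNReal.ofReal c ^ (1 / lam) * ENNReal.ofReal (1 + lam * ⟪w, F z⟫) ^ (1 / lam) := by
        intro z
        rw [ENNReal.ofReal_mul hc, ENNReal.mul_rpow_of_nonneg _ _ hppos.le]
      simp_rw [hpt]
      rw [lintegral_const_mul'' _ ((hu_meas w).ennreal_ofReal.pow_const (1 / lam)).aemeasurable,
        ENNReal.mul_rpow_of_nonneg _ _ (by positivity), ← ENNReal.rpow_mul,
        mul_one_div_cancel hppos.ne', ENNReal.rpow_one, hW w hw]
    have hchain : (∫⁻ z, ENNReal.ofReal (1 + lam * ⟪a • x + b • y, F z⟫) ^ (1 / lam) ∂ν) ^ (1 / (1 / lam))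
        ≤ ENNReal.ofReal a * ENNReal.ofReal (Real.exp (φ x)) ^ (1 / (1 / lam))
          + ENNReal.ofReal b * ENNReal.ofReal (Real.exp (φ y)) ^ (1 / (1 / lam)) := by
      rw [← hcalc a x ha hx, ← hcalc b y hb hy]
      exact le_trans (ENNReal.rpow_le_rpow hmono (by positivity)) hmink
    have hinv : 1 / (1 / lam) = lam := one_div_one_div lam
    have hER : ∀ w : EuclideanSpace ℝ (Fin d),
        ENNReal.ofReal (Real.exp (φ w)) ^ (1 / (1 / lam)) = ENNReal.ofReal (Real.exp (lam * φ w)) := by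
      intro w
      rw [hinv, ENNReal.ofReal_rpow_of_pos (Real.exp_pos _), ← Real.exp_mul, mul_comm (φ w) lam]
    rw [hW _ hθ, hER, hER, hER] at hchain
    have hretract : Real.exp (lam * φ (a • x + b • y))
        ≤ a * Real.exp (lam * φ x) + b * Real.exp (lam * φ y) := by
      rw [← ENNReal.ofReal_mul ha, ← ENNReal.ofReal_mul hb,
        ← ENNReal.ofReal_add (by positivity) (by positivity)] at hchain
      exact (ENNReal.ofReal_le_ofReal_iff (by positivity)).mp hchain
    calc 1 / lam * (Real.exp (lam * φ (a • x + b • y)) - 1)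
        ≤ 1 / lam * ((a * Real.exp (lam * φ x) + b * Real.exp (lam * φ y)) - 1) := by
          apply mul_le_mul_of_nonneg_left (by linarith) hppos.le
      _ = a * (1 / lam * (Real.exp (lam * φ x) - 1)) + b * (1 / lam * (Real.exp (lam * φ y) - 1)) := by
          linear_combination (1 / lam) * hab
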